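/- Monotonicity for g-repairs: if ≺ and ≺' are acyclic priorities on the conflict graph with ≺' ⊆ ≺, then every g-repair with respect to ≺ is a g-repair with respect to ≺'. -/
import Mathlib


/-- A relation is acyclic if no element is related to itself by the transitive closure. -/
def Acyclic {α : Type*} (prec : α → α → Prop) : Prop :=
  ∀ x, ¬ Relation.TransGen prec x x

/-- The global preference order on sets of tuples: `X ≪ Y`. -/
def ll {α : Type*} (prec : α → α → Prop) (X Y : Set α) : Prop :=
  ∀ x ∈ X \ Y, ∃ y ∈ Y \ X, prec x y

/-- Closed neighborhood of `x` in the conflict graph. -/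
def nbhd {α : Type*} (conflict : α → α → Prop) (x : α) : Set α :=
  {x} ∪ {y | conflict x y}

/-- The winnow operator: elements of `s` not dominated by any element of `s`. -/
def winnow {α : Type*} (prec : α → α → Prop) (s : Set α) : Set α :=
  {t ∈ s | ¬ ∃ t' ∈ s, prec t t'}

/-- A repair: a maximal subset of `r` containing no conflicting pair. -/
def IsRepair {α : Type*} (r : Set α) (conflict : α → α → Prop) (X : Set α) : Prop :=
  X ⊆ r ∧ (∀ a ∈ X, ∀ b ∈ X, ¬ conflict a b) ∧
    ∀ y ∈ r, y ∉ X → ∃ a ∈ X, conflict y a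

/-- A locally preferred repair: obtainable by iteratively choosing an undominated
tuple and removing it together with its conflict neighborhood. -/
def IsLRepair {α : Type*} (r : Set α) (conflict prec : α → α → Prop) (X : Set α) : Prop :=
  ∃ (n : ℕ) (x : Fin n → α), Function.Injective x ∧ X = Set.range x ∧
    (∀ i : Fin n, x i ∈ winnow prec (r \ {y | ∃ j, j < i ∧ y ∈ nbhd conflict (x j)})) ∧
    winnow prec (r \ {y | ∃ i, y ∈ nbhd conflict (x i)}) = ∅

/-- A globally preferred repair: a `≪`-maximal repair. -/
def IsGRepair {α : Type*} (r : Set α) (conflict prec : α → α → Prop) (X : Set α) : Prop :=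
  IsRepair r conflict X ∧ ∀ Y, IsRepair r conflict Y → ll prec X Y → Y = X

/-- monotonicity for g-repairs. If ≺' ⊆ ≺ are acyclic priorities,
every g-repair w.r.t. ≺ is a g-repair w.r.t. ≺'. -/
theorem grepair_monotone {α : Type*} (r : Set α) (hr : r.Finite)
    (conflict prec prec' : α → α → Prop)
    (hsymm : ∀ x y, conflict x y → conflict y x)
    (hsub : ∀ x y, prec x y → conflict x y)
    (hsub' : ∀ x y, prec' x y → conflict x y)
    (hasymm : ∀ x y, prec x y → ¬ prec y x)
    (hasymm' : ∀ x y, prec' x y → ¬ prec' y x)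
    (hacyc : Acyclic prec) (hacyc' : Acyclic prec')
    (hext : ∀ x y, prec' x y → prec x y)
    (X : Set α) (hX : IsGRepair r conflict prec X) :
    IsGRepair r conflict prec' X := by
  refine ⟨hX.1, fun Y hY hll => hX.2 Y hY fun x hx => ?_⟩
  obtain ⟨y, hy, hp⟩ := hll x hx
  exact ⟨y, hy, hext _ _ hp⟩
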